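/- For every integer n ≥ 2, the set of pairs {(cpk π, cdes π) : π a permutation of length n} has exactly ⌊n²/4⌋ elements; equivalently, the number of (cpk, cdes)-equivalence classes of cyclic permutations of length n is ⌊n²/4⌋. -/

import Mathlib

set_option maxHeartbeats 1000000


/-- A permutation: a list of distinct positive integers. -/
def IsPerm (π : List ℕ) : Prop := π.Nodup ∧ ∀ x ∈ π, 0 < x

/-- The descent set `Des π = {i ∈ {1,…,n−1} : π_i > π_{i+1}}` (1-based indexing). -/
def Des (π : List ℕ) : Finset ℕ :=
  (Finset.Icc 1 (π.length - 1)).filter fun i => π.getD i 0 < π.getD (i - 1) 0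

/-- The descent number. -/
def des (π : List ℕ) : ℕ := (Des π).card

/-- The major index. -/
def maj (π : List ℕ) : ℕ := ∑ i ∈ Des π, i

/-- The cyclic descent set `cDes π = {i ∈ {1,…,n} : π_i > π_{i+1}}`, indices mod `n`. -/
def cDes (π : List ℕ) : Finset ℕ :=
  (Finset.Icc 1 π.length).filter fun i => π.getD (i % π.length) 0 < π.getD (i - 1) 0

/-- The cyclic descent number. -/
def cdes (π : List ℕ) : ℕ := (cDes π).card

/-- The cyclic major index. -/
def cmaj (π : List ℕ) : ℕ := ∑ i ∈ cDes π, i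

/-- The peak set `Pk π = {i ∈ {2,…,n−1} : π_{i−1} < π_i > π_{i+1}}` (1-based indexing). -/
def Pk (π : List ℕ) : Finset ℕ :=
  (Finset.Icc 2 (π.length - 1)).filter fun i =>
    π.getD (i - 2) 0 < π.getD (i - 1) 0 ∧ π.getD i 0 < π.getD (i - 1) 0

/-- The peak number. -/
def pk (π : List ℕ) : ℕ := (Pk π).card

/-- The cyclic peak set `cPk π = {i ∈ {1,…,n} : π_{i−1} < π_i > π_{i+1}}`, indices mod `n`. -/
def cPk (π : List ℕ) : Finset ℕ :=
  (Finset.Icc 1 π.length).filter fun i =>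
    π.getD ((i + π.length - 2) % π.length) 0 < π.getD (i - 1) 0 ∧
      π.getD (i % π.length) 0 < π.getD (i - 1) 0

/-- The cyclic peak number. -/
def cpk (π : List ℕ) : ℕ := (cPk π).card

/-- The cyclic valley set `cVal π = {i ∈ {1,…,n} : π_{i−1} > π_i < π_{i+1}}`, indices mod `n`. -/
def cVal (π : List ℕ) : Finset ℕ :=
  (Finset.Icc 1 π.length).filter fun i =>
    π.getD (i - 1) 0 < π.getD ((i + π.length - 2) % π.length) 0 ∧
      π.getD (i - 1) 0 < π.getD (i % π.length) 0

/-- The cyclic valley number. -/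
def cval (π : List ℕ) : ℕ := (cVal π).card

/-- The distribution of a linear statistic `st` over the `n` rotations of `π`,
i.e. the multiset-valued cyclic statistic induced by `st`, evaluated at `[π]`. -/
def cycStat {A : Type*} (st : List ℕ → A) (π : List ℕ) : Multiset A :=
  (Multiset.range π.length).map fun i => st (π.rotate i)

/-- `τ` is a (linear) shuffle of `π` and `σ`. -/
def IsShuffle (π σ τ : List ℕ) : Prop :=
  π.Sublist τ ∧ σ.Sublist τ ∧ τ.length = π.length + σ.length

/-- `[τ]` is a cyclic shuffle of `[π]` and `[σ]`: some rotation of `τ` is a shuffle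
of some rotation of `π` and some rotation of `σ`. -/
def IsCyclicShuffle (π σ τ : List ℕ) : Prop :=
  ∃ i j k, IsShuffle (π.rotate i) (σ.rotate j) (τ.rotate k)

/-- The set of cyclic shuffles of `[π]` and `[σ]` (as elements of `Cycle ℕ`, so that each
cyclic shuffle is counted once) on which the statistic `cst` takes the value `v`. -/
def cycShuffleFiber {A : Type*} (cst : List ℕ → A) (π σ : List ℕ) (v : A) : Set (Cycle ℕ) :=
  {c : Cycle ℕ | ∃ τ : List ℕ, (↑τ : Cycle ℕ) = c ∧ IsCyclicShuffle π σ τ ∧ cst τ = v}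

/-- A (rotation-invariant) statistic `cst` is cyclic shuffle-compatible if the distribution
of `cst` over the set of cyclic shuffles of `[π]` and `[σ]` (each cyclic shuffle counted
once) depends only on `cst π`, `cst σ`, `|π|` and `|σ|`. -/
def CyclicShuffleCompatible {A : Type*} (cst : List ℕ → A) : Prop :=
  ∀ π σ π' σ' : List ℕ, IsPerm π → IsPerm σ → IsPerm π' → IsPerm σ' →
    π.Disjoint σ → π'.Disjoint σ' →
    π.length = π'.length → σ.length = σ'.length →
    cst π = cst π' → cst σ = cst σ' →
    ∀ v : A, (cycShuffleFiber cst π σ v).ncard = (cycShuffleFiber cst π' σ' v).ncard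

/-! ### Upper bounds -/

lemma cpk_le_cdes (π : List ℕ) : cpk π ≤ cdes π := by
  apply Finset.card_le_card
  intro i hi
  simp only [cPk, cDes, Finset.mem_filter] at *
  exact ⟨hi.1, hi.2.2⟩

def gmap (m i : ℕ) : ℕ := if i = 1 then m else i - 1

lemma cdes_add_cpk_le (π : List ℕ) (hn : 2 ≤ π.length) :
    cdes π + cpk π ≤ π.length := by
  set n := π.length with hnn
  have hsub : ∀ x ∈ cDes π ∪ (cPk π).image (gmap n), x ∈ Finset.Icc 1 n := by
    intro x hx
    rcases Finset.mem_union.1 hx with hx | hx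
    · exact Finset.mem_of_mem_filter x hx
    · obtain ⟨i, hi, rfl⟩ := Finset.mem_image.1 hx
      have hi' : i ∈ Finset.Icc 1 n := Finset.mem_of_mem_filter i hi
      simp only [Finset.mem_Icc] at hi' ⊢
      unfold gmap
      split_ifs <;> omega
  have hkey : ∀ i ∈ cPk π, gmap n i ∉ cDes π := by
    intro i hi hmem
    simp only [cPk, cDes, Finset.mem_filter, Finset.mem_Icc, ← hnn] at hi hmem
    have h1 : gmap n i % n = i - 1 ∧ gmap n i - 1 = (i + n - 2) % n := by
      unfold gmap
      split_ifs with h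
      · subst h
        constructor
        · simp [Nat.mod_self]
        · have e : 1 + n - 2 = n - 1 := by omega
          rw [e, Nat.mod_eq_of_lt (by omega)]
      · have h2 : 1 ≤ i ∧ i ≤ n := hi.1
        constructor
        · rw [Nat.mod_eq_of_lt (by omega)]
        · have e : i + n - 2 = n + (i - 2) := by omega
          rw [e, Nat.add_mod_left, Nat.mod_eq_of_lt (by omega)]
          omega
    rw [h1.1, h1.2] at hmem
    exact absurd hmem.2 (not_lt.2 (le_of_lt hi.2.1))
  have hdisj : Disjoint (cDes π) ((cPk π).image (gmap n)) := by
    rw [Finset.disjoint_right]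
    intro x hx
    obtain ⟨i, hi, rfl⟩ := Finset.mem_image.1 hx
    exact hkey i hi
  have hinj : Set.InjOn (gmap n) (cPk π) := by
    intro x hx y hy hxy
    have hx' : x ∈ Finset.Icc 1 n := Finset.mem_of_mem_filter x hx
    have hy' : y ∈ Finset.Icc 1 n := Finset.mem_of_mem_filter y hy
    simp only [Finset.mem_Icc] at hx' hy'
    unfold gmap at hxy
    split_ifs at hxy <;> omega
  calc cdes π + cpk π = (cDes π ∪ (cPk π).image (gmap n)).card := by
        rw [Finset.card_union_of_disjoint hdisj,
          Finset.card_image_of_injOn hinj]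
        rfl
    _ ≤ (Finset.Icc 1 n).card := Finset.card_le_card hsub
    _ = n := by rw [Nat.card_Icc]; omega

lemma one_le_cpk (π : List ℕ) (hn : 2 ≤ π.length) (hd : π.Nodup) :
    1 ≤ cpk π := by
  set n := π.length with hnn
  obtain ⟨p, hp, hmax⟩ := Finset.exists_max_image (Finset.range n)
    (fun q => π.getD q 0) (Finset.nonempty_range_iff.2 (by omega))
  simp only [Finset.mem_range] at hp
  have key : ∀ q, q < n → q ≠ p → π.getD q 0 < π.getD p 0 := by
    intro q hq hne
    have h1 : π.getD q 0 ≤ π.getD p 0 := hmax q (Finset.mem_range.2 hq)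
    have h2 : π.getD q 0 ≠ π.getD p 0 := by
      rw [List.getD_eq_getElem π 0 hq, List.getD_eq_getElem π 0 hp]
      intro h
      exact hne (hd.getElem_inj_iff.1 h)
    omega
  have hmem : p + 1 ∈ cPk π := by
    simp only [cPk, Finset.mem_filter, Finset.mem_Icc, ← hnn]
    refine ⟨⟨by omega, by omega⟩, ?_, ?_⟩
    · have e1 : p + 1 + n - 2 = if p = 0 then n - 1 else n + (p - 1) := by
        split_ifs <;> omega
      have e2 : (p + 1 + n - 2) % n = if p = 0 then n - 1 else p - 1 := by
        rw [e1]
        split_ifs with h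
        · exact Nat.mod_eq_of_lt (by omega)
        · rw [Nat.add_mod_left, Nat.mod_eq_of_lt (by omega)]
      have e3 : p + 1 - 1 = p := by omega
      rw [e2, e3]
      split_ifs with h <;> exact key _ (by omega) (by omega)
    · have e3 : p + 1 - 1 = p := by omega
      have e2 : (p + 1) % n = if p + 1 = n then 0 else p + 1 := by
        split_ifs with h
        · rw [h, Nat.mod_self]
        · exact Nat.mod_eq_of_lt (by omega)
      rw [e2, e3]
      split_ifs with h <;> exact key _ (by omega) (by omega)
  exact Finset.card_pos.2 ⟨p + 1, hmem⟩

/-! ### The construction -/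

def fA (n j k p : ℕ) : ℕ :=
  if p = 0 then n
  else if p ≤ k - j + 1 then k + 1 - p
  else if p ≤ k + j - 1 then
    (if (p - (k - j)) % 2 = 0 then n - (p - (k - j)) / 2 else j - (p - (k - j) - 1) / 2)
  else p - j + 1

def pl (n j k : ℕ) : List ℕ := (List.range n).map (fA n j k)

lemma pl_length (n j k : ℕ) : (pl n j k).length = n := by
  simp [pl]

lemma getD_pl (n j k p : ℕ) (hp : p < n) : (pl n j k).getD p 0 = fA n j k p := by
  rw [pl, List.getD_eq_getElem _ 0 (by simpa using hp)]
  simp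

section Construction

variable {n j k : ℕ} (hj : 1 ≤ j) (hjk : j ≤ k) (hkn : j + k ≤ n) (hn : 2 ≤ n)

include hj hjk hkn hn

lemma fA_inj : ∀ p q, p < n → q < n → fA n j k p = fA n j k q → p = q := by
  intro p q hp hq h
  unfold fA at h
  split_ifs at h <;> omega

lemma fA_bounds : ∀ p, p < n → 1 ≤ fA n j k p ∧ fA n j k p ≤ n := by
  intro p hp
  unfold fA
  split_ifs <;> omega

lemma fA_lt_top : ∀ p, 1 ≤ p → p < n → fA n j k p < n := by
  intro p h1 h2
  unfold fA
  split_ifs <;> omega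

lemma isPerm_pl : IsPerm (pl n j k) := by
  constructor
  · apply List.Nodup.map_on _ List.nodup_range
    intro x hx y hy hxy
    exact fA_inj hj hjk hkn hn x y (List.mem_range.1 hx) (List.mem_range.1 hy) hxy
  · intro x hx
    simp only [pl, List.mem_map, List.mem_range] at hx
    obtain ⟨p, hp, rfl⟩ := hx
    exact (fA_bounds hj hjk hkn hn p hp).1

lemma fA_des_char : ∀ i, 1 ≤ i → i ≤ n - 1 →
    (fA n j k i < fA n j k (i - 1) ↔
      (i ≤ k - j + 1 ∨ ((k - j) + 3 ≤ i ∧ i ≤ k + j - 1 ∧ (i - (k - j)) % 2 = 1))) := by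
  intro i h1 h2
  unfold fA
  split_ifs <;> omega

lemma fA_pk_char : ∀ i, 2 ≤ i → i ≤ n - 1 →
    ((fA n j k (i - 2) < fA n j k (i - 1) ∧ fA n j k i < fA n j k (i - 1)) ↔
      ((k - j) + 3 ≤ i ∧ i ≤ k + j - 1 ∧ (i - (k - j)) % 2 = 1)) := by
  intro i h1 h2
  have hne : fA n j k (i - 2) ≠ fA n j k (i - 1) := by
    intro h
    have := fA_inj hj hjk hkn hn (i - 2) (i - 1) (by omega) (by omega) h
    omega
  have d1 := fA_des_char hj hjk hkn hn (i - 1) (by omega) (by omega)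
  have e : i - 1 - 1 = i - 2 := by omega
  rw [e] at d1
  have d2 := fA_des_char hj hjk hkn hn i (by omega) h2
  omega

lemma cdes_pl : cdes (pl n j k) = k := by
  have hlen := pl_length n j k
  unfold cdes cDes
  rw [hlen]
  rw [Finset.filter_congr (q := fun i =>
      i ≤ k - j + 1 ∨ ((k - j) + 3 ≤ i ∧ i ≤ k + j - 1 ∧ (i - (k - j)) % 2 = 1))]
  · have hic : (Finset.Icc 1 k).card = k := by simp
    conv_rhs => rw [← hic]
    apply Finset.card_bij'
      (i := fun a _ => if a ≤ k - j + 1 then a else (a - (k - j) - 1) / 2 + (k - j) + 1)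
      (j := fun m _ => if m ≤ k - j + 1 then m else (k - j) + 2 * (m - (k - j) - 1) + 1)
      (t := Finset.Icc 1 k)
    · intro a ha
      simp only [Finset.mem_filter, Finset.mem_Icc] at ha ⊢
      split_ifs <;> omega
    · intro m hm
      simp only [Finset.mem_filter, Finset.mem_Icc] at hm ⊢
      split_ifs <;> omega
    · intro a ha
      simp only [Finset.mem_filter, Finset.mem_Icc] at ha
      split_ifs <;> omega
    · intro m hm
      simp only [Finset.mem_Icc] at hm
      split_ifs <;> omega
  · intro i hi
    simp only [Finset.mem_Icc] at hi
    by_cases hin : i = n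
    · rw [hin]
      rw [Nat.mod_self, getD_pl n j k 0 (by omega), getD_pl n j k (n - 1) (by omega)]
      have h0 : fA n j k 0 = n := by simp [fA]
      rw [h0]
      have := fA_lt_top hj hjk hkn hn (n - 1) (by omega) (by omega)
      omega
    · rw [Nat.mod_eq_of_lt (by omega), getD_pl n j k i (by omega),
        getD_pl n j k (i - 1) (by omega)]
      exact fA_des_char hj hjk hkn hn i (by omega) (by omega)

lemma cpk_pl : cpk (pl n j k) = j := by
  have hlen := pl_length n j k
  unfold cpk cPk
  rw [hlen]
  rw [Finset.filter_congr (q := fun i =>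
      i = 1 ∨ ((k - j) + 3 ≤ i ∧ i ≤ k + j - 1 ∧ (i - (k - j)) % 2 = 1))]
  · have hic : (Finset.Icc 1 j).card = j := by simp
    conv_rhs => rw [← hic]
    apply Finset.card_bij'
      (i := fun a _ => if a = 1 then 1 else (a - (k - j) - 1) / 2 + 1)
      (j := fun m _ => if m = 1 then 1 else (k - j) + 2 * (m - 1) + 1)
      (t := Finset.Icc 1 j)
    · intro a ha
      simp only [Finset.mem_filter, Finset.mem_Icc] at ha ⊢
      split_ifs <;> omega
    · intro m hm
      simp only [Finset.mem_filter, Finset.mem_Icc] at hm ⊢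
      split_ifs <;> omega
    · intro a ha
      simp only [Finset.mem_filter, Finset.mem_Icc] at ha
      split_ifs <;> omega
    · intro m hm
      simp only [Finset.mem_Icc] at hm
      split_ifs <;> omega
  · intro i hi
    simp only [Finset.mem_Icc] at hi
    have h0 : fA n j k 0 = n := by simp [fA]
    by_cases hi1 : i = 1
    · subst hi1
      have e1 : (1 + n - 2) % n = n - 1 := by
        have e : 1 + n - 2 = n - 1 := by omega
        rw [e, Nat.mod_eq_of_lt (by omega)]
      have e2 : (1 : ℕ) % n = 1 := Nat.mod_eq_of_lt (by omega)
      rw [e1, e2]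
      simp only [Nat.sub_self]
      rw [getD_pl n j k (n - 1) (by omega), getD_pl n j k 0 (by omega),
        getD_pl n j k 1 (by omega), h0]
      have h1 := fA_lt_top hj hjk hkn hn (n - 1) (by omega) (by omega)
      have h2 := fA_lt_top hj hjk hkn hn 1 (by omega) (by omega)
      exact iff_of_true ⟨h1, h2⟩ (Or.inl trivial)
    · by_cases hin : i = n
      · rw [hin]
        have e1 : (n + n - 2) % n = n - 2 := by
          have e : n + n - 2 = n + (n - 2) := by omega
          rw [e, Nat.add_mod_left, Nat.mod_eq_of_lt (by omega)]
        rw [e1, Nat.mod_self, getD_pl n j k 0 (by omega),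
          getD_pl n j k (n - 1) (by omega), getD_pl n j k (n - 2) (by omega), h0]
        have h1 := fA_lt_top hj hjk hkn hn (n - 1) (by omega) (by omega)
        omega
      · have e1 : (i + n - 2) % n = i - 2 := by
          have e : i + n - 2 = n + (i - 2) := by omega
          rw [e, Nat.add_mod_left, Nat.mod_eq_of_lt (by omega)]
        rw [e1, Nat.mod_eq_of_lt (by omega), getD_pl n j k (i - 2) (by omega),
          getD_pl n j k (i - 1) (by omega), getD_pl n j k i (by omega)]
        have := fA_pk_char hj hjk hkn hn i (by omega) (by omega)
        omega

end Construction

/-! ### Counting the pairs -/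

def Tn (n : ℕ) : Finset (ℕ × ℕ) :=
  (Finset.Icc 1 n ×ˢ Finset.Icc 1 n).filter fun p => p.1 ≤ p.2 ∧ p.1 + p.2 ≤ n

lemma mem_Tn {n : ℕ} {p : ℕ × ℕ} :
    p ∈ Tn n ↔ 1 ≤ p.1 ∧ p.1 ≤ p.2 ∧ p.1 + p.2 ≤ n := by
  simp only [Tn, Finset.mem_filter, Finset.mem_product, Finset.mem_Icc]
  omega

lemma Tn_succ_succ (n : ℕ) :
    Tn (n + 2) = ({1} ×ˢ Finset.Icc 1 (n + 1)) ∪ (Tn n).image (fun p => (p.1 + 1, p.2 + 1)) := by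
  ext ⟨a, b⟩
  simp only [mem_Tn, Finset.mem_union, Finset.mem_product, Finset.mem_singleton,
    Finset.mem_Icc, Finset.mem_image, Prod.mk.injEq, Prod.exists]
  constructor
  · rintro ⟨h1, h2, h3⟩
    by_cases ha : a = 1
    · left; omega
    · right
      refine ⟨a - 1, b - 1, ?_, ?_, ?_⟩ <;> omega
  · rintro (⟨h1, h2⟩ | ⟨x, y, hxy, hx, hy⟩)
    · omega
    · omega
lemma card_Tn : ∀ n : ℕ, (Tn n).card = n ^ 2 / 4
  | 0 => by decide
  | 1 => by decide
  | (n + 2) => by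
    rw [Tn_succ_succ]
    have hinj : Function.Injective (fun p : ℕ × ℕ => (p.1 + 1, p.2 + 1)) := by
      rintro ⟨a, b⟩ ⟨c, d⟩ h
      simp only [Prod.mk.injEq] at h ⊢
      omega
    have hdisj : Disjoint ({1} ×ˢ Finset.Icc 1 (n + 1))
        ((Tn n).image (fun p => (p.1 + 1, p.2 + 1))) := by
      rw [Finset.disjoint_left]
      rintro ⟨a, b⟩ ha hb
      simp only [Finset.mem_product, Finset.mem_singleton] at ha
      obtain ⟨⟨x, y⟩, hxy, h⟩ := Finset.mem_image.1 hb
      have := mem_Tn.1 hxy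
      simp only [Prod.mk.injEq] at h
      omega
    rw [Finset.card_union_of_disjoint hdisj, Finset.card_image_of_injective _ hinj,
      Finset.card_product, Finset.card_singleton, Nat.card_Icc, card_Tn n]
    have h1 : (n + 2) ^ 2 = n ^ 2 + 4 * n + 4 := by ring
    rw [h1]
    omega


/-- For `n ≥ 2`, the number of values of `(cpk, cdes)` on permutations of length `n`,
i.e. the number of `(cpk, cdes)`-equivalence classes of cyclic permutations of length `n`,
is `⌊n² / 4⌋`. -/
theorem card_cpk_cdes_classes (n : ℕ) (hn : 2 ≤ n) :
    {p : ℕ × ℕ | ∃ π : List ℕ, IsPerm π ∧ π.length = n ∧ cpk π = p.1 ∧ cdes π = p.2}.ncard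
      = n ^ 2 / 4 := by
  have hset : {p : ℕ × ℕ | ∃ π : List ℕ, IsPerm π ∧ π.length = n ∧ cpk π = p.1 ∧ cdes π = p.2}
      = ↑(Tn n) := by
    ext ⟨a, b⟩
    simp only [Set.mem_setOf_eq, Finset.mem_coe, mem_Tn]
    constructor
    · rintro ⟨π, hπ, hlen, ha, hb⟩
      have h1 := one_le_cpk π (by omega) hπ.1
      have h2 := cpk_le_cdes π
      have h3 := cdes_add_cpk_le π (by omega)
      rw [hlen] at h3
      omega
    · rintro ⟨h1, h2, h3⟩
      exact ⟨pl n a b, isPerm_pl h1 h2 (by omega) hn, pl_length n a b,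
        cpk_pl h1 h2 (by omega) hn, cdes_pl h1 h2 (by omega) hn⟩
  rw [hset, Set.ncard_coe_finset, card_Tn]
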